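/- Let d ≥ 1 and σ ∈ ℝ^d with 0 ≤ σ_i ≤ 1 for all i, and let k = |{i : σ_i = 1}|. For ε > 0 define S(ε) = inf{ (1/2)∑_{i=1}^d log((1+ρ_i)/(1−ρ_i)) : ρ ∈ ℝ^d, 0 ≤ ρ_i < 1 for all i, and ∑_{i=1}^d (σ_i − ρ_i)² ≤ ε² }. Then S(ε) / ((1/2)·log(1/ε)) tends to k as ε tends to 0 from the right. -/
import Mathlib


open Filter

/-- **Asymptotics of the ε-approximation common information** (analytic core of
Theorem 5 of the paper): with
`S(ε) = inf{ (1/2)∑ᵢ log((1+ρᵢ)/(1−ρᵢ)) : 0 ≤ ρᵢ < 1, ∑ᵢ (σᵢ − ρᵢ)² ≤ ε² }` and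
`k = |{i : σᵢ = 1}|`, one has `S(ε) / ((1/2) log(1/ε)) → k` as `ε → 0⁺`. -/
theorem stmt3 (d : ℕ) (hd : 1 ≤ d) (σ : Fin d → ℝ)
    (hσ : ∀ i, 0 ≤ σ i ∧ σ i ≤ 1)
    (k : ℕ) (hk : k = Nat.card {i : Fin d // σ i = 1})
    (S : ℝ → ℝ)
    (hS : ∀ ε : ℝ, 0 < ε → S ε = sInf {c : ℝ | ∃ ρ : Fin d → ℝ,
      (∀ i, 0 ≤ ρ i ∧ ρ i < 1) ∧ (∑ i, (σ i - ρ i) ^ 2) ≤ ε ^ 2 ∧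
      c = (1 / 2) * ∑ i, Real.log ((1 + ρ i) / (1 - ρ i))}) :
    Tendsto (fun ε : ℝ => S ε / ((1 / 2) * Real.log (1 / ε)))
      (nhdsWithin 0 (Set.Ioi 0)) (nhds (k : ℝ)) := by
  classical
  set A : Finset (Fin d) := Finset.univ.filter (fun i => σ i = 1) with hA
  have hkA : k = A.card := by
    rw [hk, Nat.card_eq_fintype_card, Fintype.card_subtype]
  have hAd : A.card ≤ d := by
    calc A.card ≤ (Finset.univ : Finset (Fin d)).card := Finset.card_le_card (Finset.filter_subset _ _)
    _ = d := by simp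
  have hd0 : (0:ℝ) < d := by exact_mod_cast Nat.lt_of_lt_of_le Nat.zero_lt_one hd
  have hsd : 0 < Real.sqrt d := Real.sqrt_pos.mpr hd0
  have hsd1 : (1:ℝ) ≤ Real.sqrt d := by
    rw [show (1:ℝ) = Real.sqrt 1 by simp]
    exact Real.sqrt_le_sqrt (by exact_mod_cast hd)
  set C : ℝ := ∑ i ∈ Aᶜ, Real.log ((1 + σ i) / (1 - σ i)) with hCdef
  have key : ∀ ε : ℝ, 0 < ε → ε < 1 →
      (1/2) * ((k:ℝ) * (-Real.log ε)) ≤ S ε ∧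
      S ε ≤ (1/2) * (C + (k:ℝ) * (Real.log (2 * Real.sqrt d) - Real.log ε)) := by
    intro ε hε0 hε1
    rw [hS ε hε0]
    -- lower bound for every member of the set
    have hlb : ∀ c ∈ {c : ℝ | ∃ ρ : Fin d → ℝ,
        (∀ i, 0 ≤ ρ i ∧ ρ i < 1) ∧ (∑ i, (σ i - ρ i) ^ 2) ≤ ε ^ 2 ∧
        c = (1 / 2) * ∑ i, Real.log ((1 + ρ i) / (1 - ρ i))},
        (1/2) * ((k:ℝ) * (-Real.log ε)) ≤ c := by
      rintro c ⟨ρ, hρ, hcon, rfl⟩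
      have hterm_nonneg : ∀ i, 0 ≤ Real.log ((1 + ρ i) / (1 - ρ i)) := by
        intro i
        apply Real.log_nonneg
        rw [le_div_iff₀ (by linarith [(hρ i).2])]
        linarith [(hρ i).1]
      have hA_term : ∀ i ∈ A, -Real.log ε ≤ Real.log ((1 + ρ i) / (1 - ρ i)) := by
        intro i hi
        have hσi : σ i = 1 := by simpa [hA] using hi
        have h2 : (σ i - ρ i)^2 ≤ ε^2 :=
          le_trans (Finset.single_le_sum (fun j _ => sq_nonneg (σ j - ρ j)) (Finset.mem_univ i)) hcon
        have h4 : 0 < 1 - ρ i := by linarith [(hρ i).2]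
        have h3 : 1 - ρ i ≤ ε := by nlinarith [(hρ i).1]
        have hle : ε⁻¹ ≤ (1 + ρ i) / (1 - ρ i) := by
          rw [inv_eq_one_div]
          exact div_le_div₀ (by linarith [(hρ i).1]) (by linarith [(hρ i).1]) h4 h3
        calc -Real.log ε = Real.log ε⁻¹ := (Real.log_inv ε).symm
        _ ≤ Real.log ((1 + ρ i) / (1 - ρ i)) :=
          Real.log_le_log (inv_pos.mpr hε0) hle
      have hsum : (k:ℝ) * (-Real.log ε) ≤ ∑ i, Real.log ((1 + ρ i) / (1 - ρ i)) := by
        calc (k:ℝ) * (-Real.log ε) = ∑ _i ∈ A, -Real.log ε := by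
              rw [Finset.sum_const, hkA]; ring
        _ ≤ ∑ i ∈ A, Real.log ((1 + ρ i) / (1 - ρ i)) := Finset.sum_le_sum hA_term
        _ ≤ ∑ i, Real.log ((1 + ρ i) / (1 - ρ i)) :=
          Finset.sum_le_sum_of_subset_of_nonneg (Finset.subset_univ A)
            (fun i _ _ => hterm_nonneg i)
      linarith
    -- witness
    set t : ℝ := ε / Real.sqrt d with htdef
    have ht0 : 0 < t := div_pos hε0 hsd
    have ht1 : t < 1 := lt_of_le_of_lt (div_le_self hε0.le hsd1) hε1
    set ρ : Fin d → ℝ := fun i => if σ i = 1 then 1 - t else σ i with hρdef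
    have hρmem : ∀ i, 0 ≤ ρ i ∧ ρ i < 1 := by
      intro i
      by_cases h : σ i = 1
      · simp only [hρdef, h, if_pos]
        constructor <;> simp <;> linarith
      · simp only [hρdef, h, if_neg, if_false]
        exact ⟨(hσ i).1, lt_of_le_of_ne (hσ i).2 h⟩
    have ht2 : t^2 = ε^2 / d := by
      rw [htdef, div_pow, Real.sq_sqrt hd0.le]
    have hconstraint : (∑ i, (σ i - ρ i) ^ 2) ≤ ε ^ 2 := by
      have heq : ∀ i, (σ i - ρ i)^2 = if σ i = 1 then t^2 else 0 := by
        intro i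
        by_cases h : σ i = 1 <;> simp [hρdef, h]
      calc (∑ i, (σ i - ρ i) ^ 2) = ∑ i ∈ A, t^2 := by
            rw [Finset.sum_congr rfl (fun i _ => heq i), ← Finset.sum_filter]
      _ = A.card * t^2 := by rw [Finset.sum_const]; ring
      _ ≤ d * (ε^2 / d) := by
            rw [ht2]
            apply mul_le_mul_of_nonneg_right _ (by positivity)
            exact_mod_cast hAd
      _ = ε^2 := by field_simp
    have hcost : (1 / 2) * ∑ i, Real.log ((1 + ρ i) / (1 - ρ i)) ≤
        (1/2) * (C + (k:ℝ) * (Real.log (2 * Real.sqrt d) - Real.log ε)) := by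
      have hsplit : ∑ i, Real.log ((1 + ρ i) / (1 - ρ i)) =
          (∑ i ∈ A, Real.log ((2 - t) / t)) + C := by
        rw [hCdef, ← Finset.sum_add_sum_compl A]
        congr 1
        · apply Finset.sum_congr rfl
          intro i hi
          have hσi : σ i = 1 := by simpa [hA] using hi
          simp [hρdef, hσi]
          ring_nf
        · apply Finset.sum_congr rfl
          intro i hi
          have hσi : σ i ≠ 1 := by
            simp only [hA, Finset.mem_compl, Finset.mem_filter, Finset.mem_univ,
              true_and] at hi
            exact hi
          simp [hρdef, hσi]
      have hterm : Real.log ((2 - t) / t) ≤ Real.log (2 * Real.sqrt d) - Real.log ε := by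
        have h1 : Real.log ((2 - t) / t) ≤ Real.log (2 / t) := by
          apply Real.log_le_log (div_pos (by linarith) ht0)
          exact div_le_div₀ (by norm_num) (by linarith) ht0 le_rfl
        have h2 : Real.log (2 / t) = Real.log (2 * Real.sqrt d) - Real.log ε := by
          rw [htdef, div_div_eq_mul_div, Real.log_div (by positivity) (ne_of_gt hε0),
            Real.log_mul (by norm_num) (ne_of_gt hsd)]
        linarith
      have : (∑ i ∈ A, Real.log ((2 - t) / t)) ≤ (k:ℝ) * (Real.log (2 * Real.sqrt d) - Real.log ε) := by
        calc (∑ i ∈ A, Real.log ((2 - t) / t)) ≤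
            ∑ _i ∈ A, (Real.log (2 * Real.sqrt d) - Real.log ε) :=
            Finset.sum_le_sum (fun i _ => hterm)
        _ = (k:ℝ) * (Real.log (2 * Real.sqrt d) - Real.log ε) := by
            rw [Finset.sum_const, hkA]; ring
      rw [hsplit]
      linarith
    constructor
    · exact le_csInf ⟨_, ⟨ρ, hρmem, hconstraint, rfl⟩⟩ hlb
    · exact le_trans (csInf_le ⟨_, hlb⟩ ⟨ρ, hρmem, hconstraint, rfl⟩) hcost
  -- now the squeeze
  have hmem : Set.Ioo (0:ℝ) 1 ∈ nhdsWithin (0:ℝ) (Set.Ioi 0) :=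
    Ioo_mem_nhdsGT_of_mem (by norm_num)
  have hlogtop : Tendsto (fun ε : ℝ => -Real.log ε) (nhdsWithin 0 (Set.Ioi 0)) atTop := by
    exact tendsto_neg_atBot_atTop.comp Real.tendsto_log_nhdsGT_zero
  have hupper_tendsto : Tendsto
      (fun ε : ℝ => (k:ℝ) + (C + (k:ℝ) * Real.log (2 * Real.sqrt d)) / (-Real.log ε))
      (nhdsWithin 0 (Set.Ioi 0)) (nhds (k:ℝ)) := by
    have := (tendsto_const_nhds (x := C + (k:ℝ) * Real.log (2 * Real.sqrt d))
      (f := nhdsWithin (0:ℝ) (Set.Ioi 0))).div_atTop hlogtop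
    have h2 := (tendsto_const_nhds (x := (k:ℝ)) (f := nhdsWithin (0:ℝ) (Set.Ioi 0))).add this
    simpa using h2
  apply tendsto_of_tendsto_of_tendsto_of_le_of_le' (tendsto_const_nhds (x := (k:ℝ)))
    hupper_tendsto
  · filter_upwards [hmem] with ε hε
    have hε0 : 0 < ε := hε.1
    have hε1 : ε < 1 := hε.2
    have hL : 0 < -Real.log ε := by
      have := Real.log_neg hε0 hε1; linarith
    have hlog1 : Real.log (1/ε) = -Real.log ε := by
      rw [one_div, Real.log_inv]
    have hD : 0 < (1/2) * Real.log (1/ε) := by rw [hlog1]; linarith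
    rw [le_div_iff₀ hD]
    have := (key ε hε0 hε1).1
    calc (k:ℝ) * ((1/2) * Real.log (1/ε)) = (1/2) * ((k:ℝ) * (-Real.log ε)) := by
          rw [hlog1]; ring
    _ ≤ S ε := this
  · filter_upwards [hmem] with ε hε
    have hε0 : 0 < ε := hε.1
    have hε1 : ε < 1 := hε.2
    have hL : 0 < -Real.log ε := by
      have := Real.log_neg hε0 hε1; linarith
    have hlog1 : Real.log (1/ε) = -Real.log ε := by
      rw [one_div, Real.log_inv]
    have hD : 0 < (1/2) * Real.log (1/ε) := by rw [hlog1]; linarith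
    rw [div_le_iff₀ hD]
    have := (key ε hε0 hε1).2
    calc S ε ≤ (1/2) * (C + (k:ℝ) * (Real.log (2 * Real.sqrt d) - Real.log ε)) := this
    _ = ((k:ℝ) + (C + (k:ℝ) * Real.log (2 * Real.sqrt d)) / (-Real.log ε)) *
        ((1/2) * Real.log (1/ε)) := by
          rw [hlog1]
          have hne : Real.log ε ≠ 0 := by intro h; rw [h] at hL; norm_num at hL
          field_simp
          ring
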